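/- If f : F_2^n → F_2 is k-resilient (balanced and its output is statistically independent of any k of its inputs), then W_f(y) = 0 for every y ∈ F_2^n of Hamming weight at most k. -/

import Mathlib

open Finset

/-- Inner product over F_2. -/
def ip {n : ℕ} (x y : Fin n → ZMod 2) : ZMod 2 := ∑ i, x i * y i

/-- (-1)^s for s ∈ F_2, as a rational number. -/
def sgn (s : ZMod 2) : ℚ := (-1) ^ s.val

/-- Walsh transform of f at y. -/
def walsh {n : ℕ} (f : (Fin n → ZMod 2) → ZMod 2) (y : Fin n → ZMod 2) : ℚ :=
  ∑ z, sgn (f z + ip z y)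

/-- Autocorrelation coefficient of f at y. -/
def acorr {n : ℕ} (f : (Fin n → ZMod 2) → ZMod 2) (y : Fin n → ZMod 2) : ℚ :=
  ∑ x, sgn (f x + f (x + y))

/-- P_u : probability that f(u₁)+f(u₂)+f(u₃)+f(u₄)=0 when u₁+u₂+u₃+u₄ = u,
with (u₁,u₂,u₃) uniform in (F_2^n)^3 and u₄ = u + u₁ + u₂ + u₃. -/
def probP {n : ℕ} (f : (Fin n → ZMod 2) → ZMod 2) (u : Fin n → ZMod 2) : ℚ :=
  ((univ.filter (fun t : (Fin n → ZMod 2) × (Fin n → ZMod 2) × (Fin n → ZMod 2) =>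
      f t.1 + f t.2.1 + f t.2.2 + f (t.1 + t.2.1 + t.2.2 + u) = 0)).card : ℚ) / 2 ^ (3 * n)

/-- f is balanced: it takes the value 0 on exactly 2^(n-1) inputs. -/
def IsBalancedBF {n : ℕ} (f : (Fin n → ZMod 2) → ZMod 2) : Prop :=
  (univ.filter (fun x : Fin n → ZMod 2 => f x = 0)).card = 2 ^ (n - 1)

/-- f is k-resilient: fixing any at most k coordinates, the restriction is balanced. -/
def Resilient {n : ℕ} (f : (Fin n → ZMod 2) → ZMod 2) (k : ℕ) : Prop :=
  ∀ T : Finset (Fin n), T.card ≤ k → ∀ a : Fin n → ZMod 2,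
    (univ.filter (fun x : Fin n → ZMod 2 => (∀ i ∈ T, x i = a i) ∧ f x = 0)).card =
    (univ.filter (fun x : Fin n → ZMod 2 => (∀ i ∈ T, x i = a i) ∧ f x = 1)).card

lemma zmod2_val1 : (1 : ZMod 2).val = 1 := by decide

lemma zmod2_val2 : (2 : ZMod 2).val = 0 := by decide

lemma zmod2_val11 : ((1 : ZMod 2) + 1).val = 0 := by decide

lemma sgn_eq (s : ZMod 2) : sgn s = if s = 0 then 1 else -1 := by
  fin_cases s <;> simp [sgn, zmod2_val1] <;> rfl

lemma sgn_add' (s t : ZMod 2) : sgn (s + t) = sgn s * sgn t := by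
  have h : ∀ s t : ZMod 2, (s + t = 0 ↔ (s = 0 ↔ t = 0)) := by decide
  have := h s t
  rw [sgn_eq, sgn_eq, sgn_eq]
  split_ifs <;> norm_num <;> tauto

lemma zmod2_ne_zero (s : ZMod 2) : (¬ s = 0) ↔ s = 1 := by
  revert s; decide

theorem resilient_walsh_vanish {n k : ℕ} (f : (Fin n → ZMod 2) → ZMod 2)
    (hres : Resilient f k) :
    ∀ y : Fin n → ZMod 2, (univ.filter (fun i => y i ≠ 0)).card ≤ k → walsh f y = 0 := by
  classical
  intro y hy
  set T : Finset (Fin n) := univ.filter (fun i => y i ≠ 0) with hT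
  set g : (Fin n → ZMod 2) → (Fin n → ZMod 2) := fun z i => if i ∈ T then z i else 0 with hg
  have key : ∀ a : Fin n → ZMod 2,
      ∑ z ∈ univ.filter (fun z => g z = a), sgn (f z + ip z y) = 0 := by
    intro a
    have hip : ∀ z ∈ univ.filter (fun z => g z = a), ip z y = ip a y := by
      intro z hz
      simp only [mem_filter] at hz
      unfold ip
      apply Finset.sum_congr rfl
      intro i _
      by_cases hi : i ∈ T
      · have h := congrFun hz.2 i
        simp only [hg, if_pos hi] at h
        rw [h]
      · have hyi : y i = 0 := by
          by_contra h
          exact hi (by simp [hT, h])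
        simp [hyi]
    have hcard : (univ.filter (fun z => g z = a ∧ f z = 0)).card
        = (univ.filter (fun z => g z = a ∧ f z = 1)).card := by
      by_cases ha : ∀ i, i ∉ T → a i = 0
      · have hcond : ∀ z : Fin n → ZMod 2, g z = a ↔ ∀ i ∈ T, z i = a i := by
          intro z
          constructor
          · intro h i hi
            have h2 := congrFun h i
            simpa [hg, if_pos hi] using h2
          · intro h
            funext i
            by_cases hi : i ∈ T
            · simp [hg, if_pos hi, h i hi]
            · simp [hg, if_neg hi, ha i hi]
        have h0 := hres T (by simpa [hT] using hy) a
        have e0 : (univ.filter (fun z => g z = a ∧ f z = 0))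
            = univ.filter (fun z : Fin n → ZMod 2 => (∀ i ∈ T, z i = a i) ∧ f z = 0) := by
          apply filter_congr; intro z _; simp [hcond z]
        have e1 : (univ.filter (fun z => g z = a ∧ f z = 1))
            = univ.filter (fun z : Fin n → ZMod 2 => (∀ i ∈ T, z i = a i) ∧ f z = 1) := by
          apply filter_congr; intro z _; simp [hcond z]
        rw [e0, e1, h0]
      · push_neg at ha
        obtain ⟨i, hi, hai⟩ := ha
        have hne : ∀ z : Fin n → ZMod 2, g z ≠ a := by
          intro z h
          apply hai
          have h2 := congrFun h i
          simpa [hg, if_neg hi] using h2.symm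
        have e0 : (univ.filter (fun z => g z = a ∧ f z = 0)) = ∅ := by
          apply filter_eq_empty_iff.mpr; intro z _ h; exact hne z h.1
        have e1 : (univ.filter (fun z => g z = a ∧ f z = 1)) = ∅ := by
          apply filter_eq_empty_iff.mpr; intro z _ h; exact hne z h.1
        rw [e0, e1]
    have hsum : ∑ z ∈ univ.filter (fun z => g z = a), sgn (f z) = 0 := by
      rw [Finset.sum_congr rfl (fun z _ => sgn_eq (f z)), Finset.sum_ite,
        Finset.sum_const, Finset.sum_const, Finset.filter_filter, Finset.filter_filter]
      have e1 : (univ.filter (fun z => g z = a ∧ ¬ f z = 0))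
          = univ.filter (fun z => g z = a ∧ f z = 1) := by
        apply filter_congr; intro z _; simp [zmod2_ne_zero]
      rw [e1, hcard]
      simp
    calc ∑ z ∈ univ.filter (fun z => g z = a), sgn (f z + ip z y)
        = ∑ z ∈ univ.filter (fun z => g z = a), sgn (ip a y) * sgn (f z) := by
          apply Finset.sum_congr rfl
          intro z hz
          rw [hip z hz, sgn_add', mul_comm]
      _ = sgn (ip a y) * ∑ z ∈ univ.filter (fun z => g z = a), sgn (f z) := by
          rw [Finset.mul_sum]
      _ = 0 := by rw [hsum, mul_zero]
  unfold walsh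
  rw [← Finset.sum_fiberwise univ g (fun z => sgn (f z + ip z y))]
  exact Finset.sum_eq_zero (fun a _ => key a)
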